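/- Let N ≥ 1, let p ≥ 2, let ν ∈ ℝᴺ∖{0}, and let Y, M ∈ 𝕊(N) with −Y ≤ M. Then −F_p(ν, Y) ≥ |ν|^{p−2}·(λ_N(Y) − (N + p − 3)·λ_N(M)). -/

import Mathlib

open Matrix

/-- The Loewner partial order on matrices: `X ≤ Y` iff `Y - X` is positive semidefinite. -/
def Loewner {n : Type*} [Fintype n] (X Y : Matrix n n ℝ) : Prop := (Y - X).PosSemidef

/-- The eigenvalues of a real symmetric matrix, listed in increasing order. -/
noncomputable def eigs {N : ℕ} (X : Matrix (Fin N) (Fin N) ℝ) : Fin N → ℝ :=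
  if h : X.IsHermitian then h.eigenvalues ∘ Tuple.sort h.eigenvalues else 0

/-- The smallest eigenvalue of a real symmetric matrix. -/
noncomputable def lam1 {N : ℕ} (X : Matrix (Fin N) (Fin N) ℝ) : ℝ := ⨅ i, eigs X i

/-- The largest eigenvalue of a real symmetric matrix. -/
noncomputable def lamN {N : ℕ} (X : Matrix (Fin N) (Fin N) ℝ) : ℝ := ⨆ i, eigs X i

/-- The p-Laplace function
`F_p(ν, X) = −|ν|^{p−2} (tr X + (p−2) ⟨Xν, ν⟩ / |ν|²)`. -/
noncomputable def Fp {N : ℕ} (p : ℝ) (ν : EuclideanSpace ℝ (Fin N))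
    (X : Matrix (Fin N) (Fin N) ℝ) : ℝ :=
  -(‖ν‖ ^ (p - 2)) * (X.trace +
    (p - 2) * (X.mulVec ((WithLp.equiv 2 (Fin N → ℝ)) ν) ⬝ᵥ (WithLp.equiv 2 (Fin N → ℝ)) ν)
      / ‖ν‖ ^ (2 : ℕ))

variable {N : ℕ}

lemma diag_smul_one (c : ℝ) :
    Matrix.diagonal (fun _ : Fin N => c) = c • (1 : Matrix (Fin N) (Fin N) ℝ) := by
  ext i j
  by_cases h : i = j <;> simp [Matrix.diagonal, Matrix.one_apply, h]

lemma spectral_decomp {A : Matrix (Fin N) (Fin N) ℝ} (hA : A.IsHermitian) :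
    A = (hA.eigenvectorUnitary : Matrix (Fin N) (Fin N) ℝ) * diagonal hA.eigenvalues *
      star (hA.eigenvectorUnitary : Matrix (Fin N) (Fin N) ℝ) := by
  have := hA.spectral_theorem
  rwa [show (RCLike.ofReal ∘ hA.eigenvalues : Fin N → ℝ) = hA.eigenvalues by
    funext i; simp [RCLike.ofReal_real_eq_id]] at this

lemma rayleigh_upper {A : Matrix (Fin N) (Fin N) ℝ} (hA : A.IsHermitian) (c : ℝ)
    (hc : ∀ i, hA.eigenvalues i ≤ c) (x : Fin N → ℝ) :
    x ⬝ᵥ (A *ᵥ x) ≤ c * (x ⬝ᵥ x) := by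
  set U : Matrix (Fin N) (Fin N) ℝ := (hA.eigenvectorUnitary : Matrix (Fin N) (Fin N) ℝ) with hUdef
  have hUU : U * star U = 1 := (Matrix.mem_unitaryGroup_iff).mp hA.eigenvectorUnitary.2
  have key : c • (1 : Matrix (Fin N) (Fin N) ℝ) - A
      = U * diagonal (fun i => c - hA.eigenvalues i) * star U := by
    have : diagonal (fun i => c - hA.eigenvalues i)
        = c • (1 : Matrix (Fin N) (Fin N) ℝ) - diagonal hA.eigenvalues := by
      rw [← diag_smul_one, ← Matrix.diagonal_sub]
    rw [this, Matrix.mul_sub, Matrix.sub_mul, ← spectral_decomp hA,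
      Matrix.mul_smul, Matrix.mul_one, Matrix.smul_mul, hUU]
  have hps : (c • (1 : Matrix (Fin N) (Fin N) ℝ) - A).PosSemidef := by
    rw [key]
    exact (Matrix.posSemidef_diagonal_iff.mpr (fun i => by linarith [hc i])).mul_mul_conjTranspose_same U
  have h0 := hps.dotProduct_mulVec_nonneg x
  rw [star_trivial, Matrix.sub_mulVec, Matrix.smul_mulVec, Matrix.one_mulVec,
    dotProduct_sub, dotProduct_smul] at h0
  simp only [smul_eq_mul] at h0
  linarith

lemma dot_self_eq_norm_sq (v : EuclideanSpace ℝ (Fin N)) :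
    (WithLp.equiv 2 (Fin N → ℝ) v) ⬝ᵥ (WithLp.equiv 2 (Fin N → ℝ) v) = ‖v‖ ^ 2 := by
  have h := EuclideanSpace.inner_eq_star_dotProduct v v
  rw [real_inner_self_eq_norm_sq] at h
  simpa [dotProduct_comm] using h.symm

lemma trace_eq_sum_eig {A : Matrix (Fin N) (Fin N) ℝ} (hA : A.IsHermitian) :
    A.trace = ∑ i, hA.eigenvalues i := by
  conv_lhs => rw [spectral_decomp hA]
  rw [Matrix.trace_mul_cycle, (Matrix.mem_unitaryGroup_iff').mp hA.eigenvectorUnitary.2,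
    Matrix.one_mul, Matrix.trace_diagonal]

lemma eig_lower {Y M : Matrix (Fin N) (Fin N) ℝ} (hY : Y.IsHermitian) (hM : M.IsHermitian)
    (hPS : (M + Y).PosSemidef) (cM : ℝ) (hcM : ∀ i, hM.eigenvalues i ≤ cM) (i : Fin N) :
    -cM ≤ hY.eigenvalues i := by
  set v : Fin N → ℝ := ⇑(hY.eigenvectorBasis i) with hv
  have hv1 : v ⬝ᵥ v = 1 := by
    have := dot_self_eq_norm_sq (hY.eigenvectorBasis i)
    rw [hY.eigenvectorBasis.orthonormal.1 i] at this
    simpa using this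
  have h0 := hPS.dotProduct_mulVec_nonneg v
  rw [star_trivial, Matrix.add_mulVec, dotProduct_add] at h0
  have h1 : v ⬝ᵥ (M *ᵥ v) ≤ cM := by
    have := rayleigh_upper hM cM hcM v
    rwa [hv1, mul_one] at this
  have h2 : v ⬝ᵥ (Y *ᵥ v) = hY.eigenvalues i := by
    rw [hY.mulVec_eigenvectorBasis, dotProduct_smul, smul_eq_mul, hv1, mul_one]
  linarith


lemma lamN_eq [Nonempty (Fin N)] {A : Matrix (Fin N) (Fin N) ℝ} (hA : A.IsHermitian) :
    lamN A = ⨆ i, hA.eigenvalues i := by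
  have heig : eigs A = hA.eigenvalues ∘ Tuple.sort hA.eigenvalues := dif_pos hA
  set σ := Tuple.sort hA.eigenvalues
  have hbdd : BddAbove (Set.range hA.eigenvalues) := Set.Finite.bddAbove (Set.finite_range _)
  have hbdd2 : BddAbove (Set.range (eigs A)) := Set.Finite.bddAbove (Set.finite_range _)
  apply le_antisymm
  · exact ciSup_le fun i => by rw [heig]; exact le_ciSup hbdd (σ i)
  · refine ciSup_le fun i => ?_
    have : hA.eigenvalues i = eigs A (σ⁻¹ i) := by
      rw [heig]; simp [σ]
    rw [this]
    exact le_ciSup hbdd2 (σ⁻¹ i)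

/-- Supersolution bound for the p-Laplacian, case `p ≥ 2`:
if `−Y ≤ M` then `−F_p(ν, Y) ≥ |ν|^{p−2} (λ_N(Y) − (N + p − 3) λ_N(M))`. -/
theorem pLaplace_classM_super_p_ge_two {N : ℕ} (hN : 1 ≤ N) (p : ℝ) (hp : 2 ≤ p)
    (ν : EuclideanSpace ℝ (Fin N)) (hν : ν ≠ 0)
    (Y M : Matrix (Fin N) (Fin N) ℝ) (hY : Y.IsHermitian) (hM : M.IsHermitian)
    (hYM : Loewner (-Y) M) :
    -Fp p ν Y ≥ ‖ν‖ ^ (p - 2) * (lamN Y - ((N : ℝ) + p - 3) * lamN M) := by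
  haveI : Nonempty (Fin N) := Fin.pos_iff_nonempty.mp hN
  unfold Loewner at hYM
  rw [sub_neg_eq_add] at hYM
  set cM := lamN M with hcMdef
  set cY := lamN Y with hcYdef
  have hcMeq : cM = ⨆ i, hM.eigenvalues i := lamN_eq hM
  have hcYeq : cY = ⨆ i, hY.eigenvalues i := lamN_eq hY
  have hbddM : BddAbove (Set.range hM.eigenvalues) := Set.Finite.bddAbove (Set.finite_range _)
  have hbddY : BddAbove (Set.range hY.eigenvalues) := Set.Finite.bddAbove (Set.finite_range _)
  have hcM : ∀ i, hM.eigenvalues i ≤ cM := fun i => hcMeq ▸ le_ciSup hbddM i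
  have hlow : ∀ i, -cM ≤ hY.eigenvalues i := eig_lower hY hM hYM cM hcM
  -- trace bound
  obtain ⟨i0, hi0⟩ : ∃ i, hY.eigenvalues i = ⨆ j, hY.eigenvalues j :=
    exists_eq_ciSup_of_finite
  have htr : cY - ((N : ℝ) - 1) * cM ≤ Y.trace := by
    rw [trace_eq_sum_eig hY, ← Finset.add_sum_erase _ _ (Finset.mem_univ i0)]
    have hsum : ((Finset.univ.erase i0).card : ℝ) * (-cM)
        ≤ ∑ j ∈ Finset.univ.erase i0, hY.eigenvalues j := by
      have h := Finset.sum_le_sum (fun j (_ : j ∈ Finset.univ.erase i0) => hlow j)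
      rwa [Finset.sum_const, nsmul_eq_mul] at h
    have hcard : ((Finset.univ.erase i0).card : ℝ) = (N : ℝ) - 1 := by
      rw [Finset.card_erase_of_mem (Finset.mem_univ i0)]
      simp [Nat.cast_sub hN]
    rw [hcard] at hsum
    have : hY.eigenvalues i0 = cY := by rw [hi0, hcYeq]
    nlinarith [hsum]
  -- quadratic form bound
  set w : Fin N → ℝ := WithLp.equiv 2 (Fin N → ℝ) ν with hw
  have hww : w ⬝ᵥ w = ‖ν‖ ^ 2 := dot_self_eq_norm_sq ν
  have hν0 : (0 : ℝ) < ‖ν‖ := norm_pos_iff.mpr hν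
  have hν2 : (0 : ℝ) < ‖ν‖ ^ 2 := by positivity
  have hQ : -cM * ‖ν‖ ^ 2 ≤ w ⬝ᵥ (Y *ᵥ w) := by
    have h0 := hYM.dotProduct_mulVec_nonneg w
    rw [star_trivial, Matrix.add_mulVec, dotProduct_add] at h0
    have h1 : w ⬝ᵥ (M *ᵥ w) ≤ cM * ‖ν‖ ^ 2 := by
      have := rayleigh_upper hM cM hcM w
      rwa [hww] at this
    linarith
  have hQ' : (p - 2) * (-cM) ≤ (p - 2) * ((Y *ᵥ w) ⬝ᵥ w / ‖ν‖ ^ 2) := by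
    apply mul_le_mul_of_nonneg_left _ (by linarith : (0:ℝ) ≤ p - 2)
    rw [le_div_iff₀ hν2, dotProduct_comm]
    linarith
  have hinner : cY - ((N : ℝ) + p - 3) * cM
      ≤ Y.trace + (p - 2) * ((Y *ᵥ w) ⬝ᵥ w / ‖ν‖ ^ 2) := by
    have hexp : ((N : ℝ) + p - 3) * cM = ((N : ℝ) - 1) * cM + (p - 2) * cM := by ring
    nlinarith [htr, hQ']
  have hpos : (0 : ℝ) ≤ ‖ν‖ ^ (p - 2) := Real.rpow_nonneg (norm_nonneg ν) _
  unfold Fp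
  rw [neg_mul, neg_neg, mul_div_assoc]
  calc ‖ν‖ ^ (p - 2) * (cY - ((N : ℝ) + p - 3) * cM)
      ≤ ‖ν‖ ^ (p - 2) * (Y.trace + (p - 2) * ((Y *ᵥ w) ⬝ᵥ w / ‖ν‖ ^ 2)) :=
        mul_le_mul_of_nonneg_left hinner hpos
    _ = _ := by norm_num [hw]
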